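/- Let d ≥ 1, let G_1,…,G_d̄ be a partition of {1,…,d} into nonempty disjoint groups, let α ∈ ℝ^d̄ have strictly positive entries, and let p, q, s, t ∈ [1,∞] satisfy 1/p + 1/q = 1 and 1/s + 1/t = 1. Let e be a real random variable and X a random vector in ℝ^d, independent of each other, both with finite second moments, with σ² = E[e²] and E[e²] − (E[|e|])² > 0, and fix β* ∈ ℝ^d. Then for every z ∈ ℝ^d, sup_{ζ ∈ ℝ^d} { 2σ·ζᵀz − E[ ‖eζ − (ζᵀX)β*‖_{α-(p,s)}² ] } ≤ σ²·‖z‖_{α⁻¹-(q,t)}² / ( E[e²] − (E[|e|])² ). -/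

import Mathlib

open scoped ENNReal BigOperators
open MeasureTheory Filter

/-- The l_p norm (p ∈ [1,∞], with sup modification at p = ∞) of a finite real vector. -/
noncomputable def lpn (p : ℝ≥0∞) {ι : Type} [Fintype ι] (x : ι → ℝ) : ℝ :=
  ‖(WithLp.equiv p (ι → ℝ)).symm x‖

section lpnLemmas

variable {ι : Type} [Fintype ι]

lemma lpn_eq_sum {p : ℝ≥0∞} (hp : 0 < p.toReal) (u : ι → ℝ) :
    lpn p u = (∑ i, |u i| ^ p.toReal) ^ (1 / p.toReal) := by
  rw [lpn, PiLp.norm_eq_sum hp]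
  simp_rw [WithLp.equiv_symm_apply, Real.norm_eq_abs]

lemma lpn_nonneg (p : ℝ≥0∞) (u : ι → ℝ) : 0 ≤ lpn p u := by
  rcases eq_or_ne p 0 with rfl | hp0
  · rw [lpn, PiLp.norm_eq_card]
    positivity
  rcases eq_or_ne p ⊤ with rfl | hpt
  · rw [lpn, PiLp.norm_eq_ciSup]
    exact Real.iSup_nonneg fun i => norm_nonneg _
  · rw [lpn_eq_sum (ENNReal.toReal_pos hp0 hpt)]
    positivity

lemma lpn_top (u : ι → ℝ) : lpn ⊤ u = ⨆ i, |u i| := by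
  rw [lpn, PiLp.norm_eq_ciSup]
  simp_rw [WithLp.equiv_symm_apply, Real.norm_eq_abs]

lemma lpn_one (u : ι → ℝ) : lpn 1 u = ∑ i, |u i| := by
  rw [lpn_eq_sum (by simp)]
  simp

lemma lpn_congr {p : ℝ≥0∞} (hp0 : p ≠ 0) {E : ι → Type} [∀ i, SeminormedAddCommGroup (E i)]
    (u : ι → ℝ) (v : ∀ i, E i) (h : ∀ i, |u i| = ‖v i‖) :
    lpn p u = ‖(WithLp.equiv p (∀ i, E i)).symm v‖ := by
  rcases eq_or_ne p ⊤ with rfl | hpt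
  · rw [lpn_top, PiLp.norm_eq_ciSup]
    refine iSup_congr fun i => ?_
    rw [h i, WithLp.equiv_symm_apply, PiLp.toLp_apply]
  · have hp : 0 < p.toReal := ENNReal.toReal_pos hp0 hpt
    rw [lpn_eq_sum hp, PiLp.norm_eq_sum hp]
    congr 1
    exact Finset.sum_congr rfl fun i _ => by rw [WithLp.equiv_symm_apply, PiLp.toLp_apply, ← h i]

lemma lpn_smul {p : ℝ≥0∞} (hp : 1 ≤ p) (c : ℝ) (u : ι → ℝ) :
    lpn p (fun i => c * u i) = |c| * lpn p u := by
  haveI : Fact (1 ≤ p) := ⟨hp⟩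
  have h : (WithLp.equiv p (ι → ℝ)).symm (fun i => c * u i)
      = c • (WithLp.equiv p (ι → ℝ)).symm u := by
    rw [WithLp.equiv_symm_apply, ← WithLp.toLp_smul]
    rfl
  rw [lpn, h, norm_smul, Real.norm_eq_abs, lpn]

lemma lpn_holder_one_top (u v : ι → ℝ) : ∑ i, u i * v i ≤ lpn 1 u * lpn ⊤ v := by
  rw [lpn_one, lpn_top, Finset.sum_mul]
  refine Finset.sum_le_sum fun i _ => ?_
  calc u i * v i ≤ |u i * v i| := le_abs_self _
    _ = |u i| * |v i| := abs_mul _ _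
    _ ≤ |u i| * ⨆ j, |v j| := by
        refine mul_le_mul_of_nonneg_left ?_ (abs_nonneg _)
        exact le_ciSup (f := fun j => |v j|) (Set.Finite.bddAbove (Set.finite_range _)) i

lemma lpn_holder {p q : ℝ≥0∞} (hpq : ENNReal.HolderConjugate p q) (u v : ι → ℝ) :
    ∑ i, u i * v i ≤ lpn p u * lpn q v := by
  rcases eq_or_ne p ⊤ with rfl | hpt
  · have hq : q = 1 := by
      have h := @ENNReal.HolderConjugate.inv_add_inv_eq_one _ _ hpq
      simp only [ENNReal.inv_top, zero_add] at h
      rwa [ENNReal.inv_eq_one] at h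
    subst hq
    rw [mul_comm]
    simpa [mul_comm] using lpn_holder_one_top v u
  rcases eq_or_ne q ⊤ with rfl | hqt
  · have hp : p = 1 := by
      have h := @ENNReal.HolderConjugate.inv_add_inv_eq_one _ _ hpq
      simp only [ENNReal.inv_top, add_zero] at h
      rwa [ENNReal.inv_eq_one] at h
    subst hp
    exact lpn_holder_one_top u v
  · have hp0 : p ≠ 0 := @ENNReal.HolderConjugate.ne_zero p q hpq
    have hq0 : q ≠ 0 := @ENNReal.HolderConjugate.ne_zero q p (ENNReal.HolderConjugate.symm (hpq := hpq))
    have hp1 : p ≠ 1 := by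
      rintro rfl
      have h : q = ⊤ := by simpa using ENNReal.HolderConjugate.conj_eq (h := hpq)
      exact hqt h
    have hplt : 1 < p := lt_of_le_of_ne (@ENNReal.HolderConjugate.one_le p q hpq) (Ne.symm hp1)
    have hprlt : 1 < p.toReal := by
      have := (ENNReal.toReal_lt_toReal (by simp) hpt).mpr hplt
      simpa using this
    have hsum : p.toReal⁻¹ + q.toReal⁻¹ = 1 := by
      rw [← ENNReal.toReal_inv, ← ENNReal.toReal_inv,
        ← ENNReal.toReal_add (ENNReal.inv_ne_top.mpr hp0) (ENNReal.inv_ne_top.mpr hq0),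
        (@ENNReal.HolderConjugate.inv_add_inv_eq_one p q hpq), ENNReal.toReal_one]
    have hR : Real.HolderConjugate p.toReal q.toReal := Real.holderConjugate_iff.mpr ⟨hprlt, hsum⟩
    have h := Real.inner_le_Lp_mul_Lq (s := Finset.univ) (f := u) (g := v) hR
    rwa [lpn_eq_sum (ENNReal.toReal_pos hp0 hpt), lpn_eq_sum (ENNReal.toReal_pos hq0 hqt)]

end lpnLemmas
/-- The α-(p,s) groupwise norm: ‖x‖ = ( Σ_i α_i^s ‖x(G_i)‖_p^s )^{1/s}. -/
noncomputable def gnorm {d dbar : ℕ} (G : Fin dbar → Finset (Fin d)) (α : Fin dbar → ℝ)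
    (p s : ℝ≥0∞) (x : Fin d → ℝ) : ℝ :=
  lpn s (fun i => α i * lpn p (fun j : {k // k ∈ G i} => x j.1))

/-- G_1, …, G_d̄ form a partition of {1,…,d} into nonempty disjoint groups. -/
def IsPartition {d dbar : ℕ} (G : Fin dbar → Finset (Fin d)) : Prop :=
  (∀ i, (G i).Nonempty) ∧ (∀ i j, i ≠ j → Disjoint (G i) (G j)) ∧ (∀ k, ∃ i, k ∈ G i)

section gnormLemmas

variable {d dbar : ℕ} (G : Fin dbar → Finset (Fin d)) (α : Fin dbar → ℝ) {p s : ℝ≥0∞}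

lemma gnorm_nonneg (x : Fin d → ℝ) : 0 ≤ gnorm G α p s x := lpn_nonneg _ _

lemma gnorm_smul (hp : 1 ≤ p) (hs : 1 ≤ s) (c : ℝ) (x : Fin d → ℝ) :
    gnorm G α p s (fun k => c * x k) = |c| * gnorm G α p s x := by
  unfold gnorm
  rw [show (fun i => α i * lpn p fun j : {k // k ∈ G i} => c * x j.1)
      = fun i => |c| * (α i * lpn p fun j : {k // k ∈ G i} => x j.1) by
    funext i; rw [lpn_smul hp]; ring]
  rw [lpn_smul hs, abs_abs]

lemma gnorm_eq_norm (hp : 1 ≤ p) (hs : 1 ≤ s) (x : Fin d → ℝ) :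
    gnorm G α p s x = ‖(WithLp.equiv s (∀ i, PiLp p (fun _ : {k // k ∈ G i} => ℝ))).symm
      (fun i => (WithLp.equiv p ({k // k ∈ G i} → ℝ)).symm
        (fun j : {k // k ∈ G i} => α i * x j.1))‖ := by
  haveI : Fact (1 ≤ p) := ⟨hp⟩
  unfold gnorm
  refine lpn_congr (zero_lt_one.trans_le hs).ne' _ _ fun i => ?_
  have h : ‖(WithLp.equiv p ({k // k ∈ G i} → ℝ)).symm (fun j => α i * x j.1)‖
      = lpn p (fun j : {k // k ∈ G i} => α i * x j.1) := rfl
  rw [h, lpn_smul hp, abs_mul, abs_of_nonneg (lpn_nonneg _ _)]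

lemma gnorm_add_le (hp : 1 ≤ p) (hs : 1 ≤ s) (x y : Fin d → ℝ) :
    gnorm G α p s (fun k => x k + y k) ≤ gnorm G α p s x + gnorm G α p s y := by
  haveI : Fact (1 ≤ p) := ⟨hp⟩
  haveI : Fact (1 ≤ s) := ⟨hs⟩
  rw [gnorm_eq_norm G α hp hs, gnorm_eq_norm G α hp hs, gnorm_eq_norm G α hp hs]
  have key : (fun i => (WithLp.equiv p ({k // k ∈ G i} → ℝ)).symm
        (fun j : {k // k ∈ G i} => α i * (x j.1 + y j.1)))
      = (fun i => (WithLp.equiv p ({k // k ∈ G i} → ℝ)).symm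
          (fun j : {k // k ∈ G i} => α i * x j.1))
        + (fun i => (WithLp.equiv p ({k // k ∈ G i} → ℝ)).symm
          (fun j : {k // k ∈ G i} => α i * y j.1)) := by
    funext i
    rw [Pi.add_apply, WithLp.equiv_symm_apply, ← WithLp.toLp_add]
    congr 1
    funext j
    rw [Pi.add_apply]
    ring
  rw [key, WithLp.equiv_symm_apply, WithLp.toLp_add]
  exact norm_add_le _ _

lemma gnorm_abs_sub_le (hp : 1 ≤ p) (hs : 1 ≤ s) (x y : Fin d → ℝ) :
    |gnorm G α p s x - gnorm G α p s y| ≤ gnorm G α p s (fun k => x k - y k) := by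
  have hneg : gnorm G α p s (fun k => y k - x k) = gnorm G α p s (fun k => x k - y k) := by
    have h1 : (fun k => y k - x k) = fun k => (-1 : ℝ) * (x k - y k) := by funext k; ring
    rw [h1, gnorm_smul G α hp hs]
    simp
  rw [abs_sub_le_iff]
  constructor
  · have h := gnorm_add_le G α hp hs (fun k => x k - y k) y
    have he : (fun k => (fun k => x k - y k) k + y k) = x := by funext k; simp
    rw [he] at h
    linarith
  · have h := gnorm_add_le G α hp hs (fun k => y k - x k) x
    have he : (fun k => (fun k => y k - x k) k + x k) = y := by funext k; simp
    rw [he] at h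
    linarith [hneg]

lemma gnorm_sub_le (hp : 1 ≤ p) (hs : 1 ≤ s) (x y : Fin d → ℝ) :
    gnorm G α p s (fun k => x k - y k) ≤ gnorm G α p s x + gnorm G α p s y := by
  have h := gnorm_add_le G α hp hs x (fun k => (-1 : ℝ) * y k)
  have he : (fun k => x k + (fun k => (-1 : ℝ) * y k) k) = fun k => x k - y k := by
    funext k; simp; ring
  rw [he, gnorm_smul G α hp hs] at h
  simpa using h

lemma gnorm_continuous (hp : 1 ≤ p) (hs : 1 ≤ s) :
    Continuous fun x : Fin d → ℝ => gnorm G α p s x := by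
  haveI : Fact (1 ≤ p) := ⟨hp⟩
  haveI : Fact (1 ≤ s) := ⟨hs⟩
  have hlpn : ∀ (ι : Type) (_ : Fintype ι) (r : ℝ≥0∞) (_ : 1 ≤ r),
      Continuous fun u : ι → ℝ => lpn r u := by
    intro ι _ r hr
    haveI : Fact (1 ≤ r) := ⟨hr⟩
    exact continuous_norm.comp (PiLp.continuous_toLp r (fun _ : ι => ℝ))
  unfold gnorm
  refine (hlpn _ _ s hs).comp (continuous_pi fun i => ?_)
  exact continuous_const.mul ((hlpn _ _ p hp).comp (continuous_pi fun j => continuous_apply j.1))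

lemma gnorm_holder (hG : IsPartition G) (hα : ∀ i, 0 < α i) {q t : ℝ≥0∞}
    (hpq : ENNReal.HolderConjugate p q) (hst : ENNReal.HolderConjugate s t)
    (x z : Fin d → ℝ) :
    ∑ k, x k * z k ≤ gnorm G α p s x * gnorm G (fun i => (α i)⁻¹) q t z := by
  classical
  have hcover : Finset.univ.biUnion G = Finset.univ := by
    refine Finset.eq_univ_iff_forall.mpr fun k => ?_
    rcases hG.2.2 k with ⟨i, hi⟩
    exact Finset.mem_biUnion.mpr ⟨i, Finset.mem_univ _, hi⟩
  have h1 : ∑ k, x k * z k = ∑ i, ∑ k ∈ G i, x k * z k := by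
    conv_lhs => rw [← hcover]
    exact Finset.sum_biUnion fun i _ j _ hij => hG.2.1 i j hij
  rw [h1]
  have h2 : ∀ i, ∑ k ∈ G i, x k * z k
      ≤ (α i * lpn p (fun j : {k // k ∈ G i} => x j.1))
        * ((α i)⁻¹ * lpn q (fun j : {k // k ∈ G i} => z j.1)) := by
    intro i
    have hsub : ∑ k ∈ G i, x k * z k = ∑ j : {k // k ∈ G i}, x j.1 * z j.1 := by
      rw [Finset.univ_eq_attach]
      exact (Finset.sum_attach (G i) fun k => x k * z k).symm
    have hmm : (α i * lpn p (fun j : {k // k ∈ G i} => x j.1))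
        * ((α i)⁻¹ * lpn q (fun j : {k // k ∈ G i} => z j.1))
        = lpn p (fun j : {k // k ∈ G i} => x j.1)
          * lpn q (fun j : {k // k ∈ G i} => z j.1) := by
      rw [mul_mul_mul_comm, mul_inv_cancel₀ (hα i).ne', one_mul]
    rw [hsub, hmm]
    exact lpn_holder hpq _ _
  calc ∑ i, ∑ k ∈ G i, x k * z k
      ≤ ∑ i, (α i * lpn p (fun j : {k // k ∈ G i} => x j.1))
        * ((α i)⁻¹ * lpn q (fun j : {k // k ∈ G i} => z j.1)) :=
        Finset.sum_le_sum fun i _ => h2 i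
    _ ≤ _ := lpn_holder hst _ _

lemma gnorm_comp_measurable {d dbar : ℕ} (G : Fin dbar → Finset (Fin d)) (α : Fin dbar → ℝ)
    {p s : ℝ≥0∞} (hp : 1 ≤ p) (hs : 1 ≤ s) {Ω : Type} [MeasurableSpace Ω]
    {f : Ω → Fin d → ℝ} (hf : Measurable f) :
    Measurable fun ω => gnorm G α p s (f ω) :=
  (gnorm_continuous G α hp hs).measurable.comp hf

end gnormLemmas
set_option maxHeartbeats 2000000 in
theorem statement13 {d dbar : ℕ} (hd : 1 ≤ d)
    (G : Fin dbar → Finset (Fin d)) (hG : IsPartition G)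
    (α : Fin dbar → ℝ) (hα : ∀ i, 0 < α i)
    (p q s t : ℝ≥0∞) (hp : 1 ≤ p) (hq : 1 ≤ q) (hs : 1 ≤ s) (ht : 1 ≤ t)
    (hpq : 1 / p + 1 / q = 1) (hst : 1 / s + 1 / t = 1)
    {Ω : Type} [MeasurableSpace Ω] (P : Measure Ω) [IsProbabilityMeasure P]
    (e : Ω → ℝ) (X : Ω → Fin d → ℝ)
    (hem : Measurable e) (hXm : Measurable X)
    (hindep : ProbabilityTheory.IndepFun X e P)
    (he2 : Integrable (fun ω => e ω ^ 2) P)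
    (hX2 : ∀ k l, Integrable (fun ω => X ω k * X ω l) P)
    (σ : ℝ) (hσnn : 0 ≤ σ) (hσ : σ ^ 2 = ∫ ω, e ω ^ 2 ∂P)
    (hvar : 0 < (∫ ω, e ω ^ 2 ∂P) - (∫ ω, |e ω| ∂P) ^ 2)
    (βstar : Fin d → ℝ) (z : Fin d → ℝ) :
    (⨆ ζ : Fin d → ℝ,
        (2 * σ * ∑ k, ζ k * z k -
          ∫ ω, (gnorm G α p s (fun k => e ω * ζ k - (∑ l, ζ l * X ω l) * βstar k)) ^ 2 ∂P))
      ≤ σ ^ 2 * (gnorm G (fun i => (α i)⁻¹) q t z) ^ 2 /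
          ((∫ ω, e ω ^ 2 ∂P) - (∫ ω, |e ω| ∂P) ^ 2) := by
  classical
  have hpq' : ENNReal.HolderConjugate p q := ENNReal.holderConjugate_iff.mpr (by rw [← one_div, ← one_div]; exact hpq)
  have hst' : ENNReal.HolderConjugate s t := ENNReal.holderConjugate_iff.mpr (by rw [← one_div, ← one_div]; exact hst)
  have habs_le : ∀ x : ℝ, |x| ≤ 1 + x ^ 2 := by
    intro x
    nlinarith [sq_nonneg (|x| - 1), abs_nonneg x, sq_abs x]
  set S := ∫ ω, e ω ^ 2 ∂P with hS
  set m := ∫ ω, |e ω| ∂P with hm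
  set Zs := gnorm G (fun i => (α i)⁻¹) q t z with hZs
  have hZnn : 0 ≤ Zs := gnorm_nonneg _ _ _
  have hc : 0 < S - m ^ 2 := hvar
  refine Real.iSup_le (fun ζ => ?_) (div_nonneg (by positivity) hc.le)
  set A := gnorm G α p s ζ with hA
  set B := gnorm G α p s βstar with hB
  have hAnn : 0 ≤ A := gnorm_nonneg _ _ _
  have hBnn : 0 ≤ B := gnorm_nonneg _ _ _
  have hmnn : 0 ≤ m := integral_nonneg fun ω => abs_nonneg _
  -- measurability of v ω = ∑ l, ζ l * X ω l
  have hvm : Measurable fun ω => ∑ l, ζ l * X ω l :=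
    Finset.measurable_sum _ fun l _ => measurable_const.mul ((measurable_pi_apply l).comp hXm)
  -- integrability facts
  have he1 : Integrable e P := by
    refine Integrable.mono' ((integrable_const (1 : ℝ)).add he2) hem.aestronglyMeasurable
      (ae_of_all _ fun ω => ?_)
    simpa [Real.norm_eq_abs] using habs_le (e ω)
  have heabs : Integrable (fun ω => |e ω|) P := he1.abs
  have hv2 : Integrable (fun ω => (∑ l, ζ l * X ω l) ^ 2) P := by
    have hexp : (fun ω => (∑ l, ζ l * X ω l) ^ 2)
        = fun ω => ∑ k, ∑ l, ζ k * ζ l * (X ω k * X ω l) := by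
      funext ω
      rw [sq, Finset.sum_mul_sum]
      refine Finset.sum_congr rfl fun k _ => Finset.sum_congr rfl fun l _ => by ring
    rw [hexp]
    exact integrable_finset_sum _ fun k _ =>
      integrable_finset_sum _ fun l _ => (hX2 k l).const_mul _
  have hv1 : Integrable (fun ω => ∑ l, ζ l * X ω l) P := by
    refine Integrable.mono' ((integrable_const (1 : ℝ)).add hv2) hvm.aestronglyMeasurable
      (ae_of_all _ fun ω => ?_)
    simpa [Real.norm_eq_abs] using habs_le (∑ l, ζ l * X ω l)
  have hvabs : Integrable (fun ω => |∑ l, ζ l * X ω l|) P := hv1.abs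
  have hev : Integrable (fun ω => |∑ l, ζ l * X ω l| * |e ω|) P := by
    refine Integrable.mono' (hv2.add he2) (hvm.abs.mul hem.abs).aestronglyMeasurable
      (ae_of_all _ fun ω => ?_)
    rw [Real.norm_eq_abs, abs_mul, abs_abs, abs_abs]
    simp only [Pi.add_apply]
    nlinarith [sq_abs (∑ l, ζ l * X ω l), sq_abs (e ω),
      sq_nonneg (|∑ l, ζ l * X ω l| - |e ω|)]
  -- independence and product formula
  have hind2 : ProbabilityTheory.IndepFun (fun ω => |∑ l, ζ l * X ω l|) (fun ω => |e ω|) P := by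
    have hφ : Measurable fun x : Fin d → ℝ => |∑ l, ζ l * x l| :=
      (Finset.measurable_sum _ fun l _ => measurable_const.mul (measurable_pi_apply l)).abs
    exact hindep.comp hφ measurable_abs
  have hmul : ∫ ω, |∑ l, ζ l * X ω l| * |e ω| ∂P
      = (∫ ω, |∑ l, ζ l * X ω l| ∂P) * (∫ ω, |e ω| ∂P) := by
    have h := hind2.integral_fun_mul_eq_mul_integral hvabs.aestronglyMeasurable heabs.aestronglyMeasurable
    simpa [Pi.mul_apply] using h
  set u := ∫ ω, |∑ l, ζ l * X ω l| ∂P with hu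
  have hunn : 0 ≤ u := integral_nonneg fun ω => abs_nonneg _
  set V := ∫ ω, (∑ l, ζ l * X ω l) ^ 2 ∂P with hV
  -- second moment bounds first moment squared
  have hVu : u ^ 2 ≤ V := by
    have h0 : 0 ≤ ∫ ω, (|∑ l, ζ l * X ω l| - u) ^ 2 ∂P :=
      integral_nonneg fun ω => sq_nonneg _
    have hexp : (fun ω => (|∑ l, ζ l * X ω l| - u) ^ 2)
        = fun ω => ((∑ l, ζ l * X ω l) ^ 2 - (2 * u) * |∑ l, ζ l * X ω l|) + u ^ 2 := by
      funext ω
      rw [sub_sq, sq_abs]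
      ring
    rw [hexp] at h0
    have hI1' : Integrable (fun ω => (∑ l, ζ l * X ω l) ^ 2
        - (2 * u) * |∑ l, ζ l * X ω l|) P := hv2.sub (hvabs.const_mul _)
    rw [integral_add hI1' (integrable_const _),
      integral_sub hv2 (hvabs.const_mul _), integral_const_mul, integral_const,
      probReal_univ, smul_eq_mul, one_mul, ← hu, ← hV] at h0
    nlinarith [h0]
  -- pointwise lower bound
  have hlow : ∀ ω, (|e ω| * A - |∑ l, ζ l * X ω l| * B) ^ 2
      ≤ (gnorm G α p s fun k => e ω * ζ k - (∑ l, ζ l * X ω l) * βstar k) ^ 2 := by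
    intro ω
    have h1 := gnorm_abs_sub_le G α hp hs (fun k => e ω * ζ k)
      (fun k => (∑ l, ζ l * X ω l) * βstar k)
    rw [gnorm_smul G α hp hs, gnorm_smul G α hp hs, ← hA, ← hB] at h1
    have h2 : (fun k => (fun k => e ω * ζ k) k - (fun k => (∑ l, ζ l * X ω l) * βstar k) k)
        = fun k => e ω * ζ k - (∑ l, ζ l * X ω l) * βstar k := rfl
    rw [h2] at h1
    calc (|e ω| * A - |∑ l, ζ l * X ω l| * B) ^ 2
        = |(|e ω| * A - |∑ l, ζ l * X ω l| * B)| ^ 2 := (sq_abs _).symm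
      _ ≤ (gnorm G α p s fun k => e ω * ζ k - (∑ l, ζ l * X ω l) * βstar k) ^ 2 :=
          pow_le_pow_left₀ (abs_nonneg _) h1 2
  -- pointwise upper bound (for integrability)
  have hup : ∀ ω, (gnorm G α p s fun k => e ω * ζ k - (∑ l, ζ l * X ω l) * βstar k)
      ≤ |e ω| * A + |∑ l, ζ l * X ω l| * B := by
    intro ω
    have h1 := gnorm_sub_le G α hp hs (fun k => e ω * ζ k)
      (fun k => (∑ l, ζ l * X ω l) * βstar k)
    rw [gnorm_smul G α hp hs, gnorm_smul G α hp hs, ← hA, ← hB] at h1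
    exact h1
  have hNm : Measurable fun ω =>
      (gnorm G α p s fun k => e ω * ζ k - (∑ l, ζ l * X ω l) * βstar k) := by
    have hi : Measurable fun ω => (fun k => e ω * ζ k - (∑ l, ζ l * X ω l) * βstar k) :=
      measurable_pi_lambda _ fun k => (hem.mul measurable_const).sub (hvm.mul measurable_const)
    exact gnorm_comp_measurable G α hp hs hi
  have hI1 : Integrable (fun ω => (|e ω| * A - |∑ l, ζ l * X ω l| * B) ^ 2) P := by
    have hexp : (fun ω => (|e ω| * A - |∑ l, ζ l * X ω l| * B) ^ 2)
        = fun ω => ((A ^ 2 * e ω ^ 2 - (2 * A * B) * (|∑ l, ζ l * X ω l| * |e ω|))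
            + B ^ 2 * (∑ l, ζ l * X ω l) ^ 2) := by
      funext ω
      rw [sub_sq, mul_pow, mul_pow, sq_abs, sq_abs]
      ring
    rw [hexp]
    exact ((he2.const_mul _).sub (hev.const_mul _)).add (hv2.const_mul _)
  have hN2 : Integrable (fun ω =>
      (gnorm G α p s fun k => e ω * ζ k - (∑ l, ζ l * X ω l) * βstar k) ^ 2) P := by
    refine Integrable.mono' ((he2.const_mul (2 * A ^ 2)).add (hv2.const_mul (2 * B ^ 2)))
      ((hNm.pow_const 2).aestronglyMeasurable) (ae_of_all _ fun ω => ?_)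
    have h1 := hup ω
    have h0 := gnorm_nonneg (p := p) (s := s) G α (fun k => e ω * ζ k - (∑ l, ζ l * X ω l) * βstar k)
    have h2 : (gnorm G α p s fun k => e ω * ζ k - (∑ l, ζ l * X ω l) * βstar k) ^ 2
        ≤ (|e ω| * A + |∑ l, ζ l * X ω l| * B) ^ 2 := pow_le_pow_left₀ h0 h1 2
    rw [Real.norm_eq_abs, abs_of_nonneg (sq_nonneg _)]
    simp only [Pi.add_apply]
    nlinarith [sq_nonneg (|e ω| * A - |∑ l, ζ l * X ω l| * B), sq_abs (e ω),
      sq_abs (∑ l, ζ l * X ω l)]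
  -- key integral inequality
  have hkey : (S - m ^ 2) * A ^ 2
      ≤ ∫ ω, (gnorm G α p s fun k => e ω * ζ k - (∑ l, ζ l * X ω l) * βstar k) ^ 2 ∂P := by
    have step1 : ∫ ω, (|e ω| * A - |∑ l, ζ l * X ω l| * B) ^ 2 ∂P
        ≤ ∫ ω, (gnorm G α p s fun k => e ω * ζ k - (∑ l, ζ l * X ω l) * βstar k) ^ 2 ∂P :=
      integral_mono hI1 hN2 fun ω => hlow ω
    have step2 : ∫ ω, (|e ω| * A - |∑ l, ζ l * X ω l| * B) ^ 2 ∂P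
        = A ^ 2 * S - (2 * A * B) * (u * m) + B ^ 2 * V := by
      have hexp : (fun ω => (|e ω| * A - |∑ l, ζ l * X ω l| * B) ^ 2)
          = fun ω => ((A ^ 2 * e ω ^ 2 - (2 * A * B) * (|∑ l, ζ l * X ω l| * |e ω|))
              + B ^ 2 * (∑ l, ζ l * X ω l) ^ 2) := by
        funext ω
        rw [sub_sq, mul_pow, mul_pow, sq_abs, sq_abs]
        ring
      have hIa : Integrable (fun ω => A ^ 2 * e ω ^ 2
          - (2 * A * B) * (|∑ l, ζ l * X ω l| * |e ω|)) P :=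
        (he2.const_mul _).sub (hev.const_mul _)
      rw [hexp, integral_add hIa (hv2.const_mul _),
        integral_sub (he2.const_mul _) (hev.const_mul _), integral_const_mul,
        integral_const_mul, integral_const_mul, hmul, ← hS, ← hm, ← hV]
      try ring
    have hBV : B ^ 2 * u ^ 2 ≤ B ^ 2 * V := by
      exact mul_le_mul_of_nonneg_left hVu (sq_nonneg B)
    nlinarith [sq_nonneg (B * u - A * m), step1, step2, hBV]
  -- Hölder
  have hhol : ∑ k, ζ k * z k ≤ A * Zs := gnorm_holder G α hG hα hpq' hst' ζ z
  -- conclusion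
  have h2 : 2 * σ * ∑ k, ζ k * z k ≤ 2 * σ * (A * Zs) :=
    mul_le_mul_of_nonneg_left hhol (by positivity)
  have h3 : 2 * σ * (A * Zs) - (S - m ^ 2) * A ^ 2 ≤ σ ^ 2 * Zs ^ 2 / (S - m ^ 2) := by
    rw [div_eq_mul_inv, ← sub_nonneg]
    have hrw : σ ^ 2 * Zs ^ 2 * (S - m ^ 2)⁻¹ - (2 * σ * (A * Zs) - (S - m ^ 2) * A ^ 2)
        = (σ * Zs - (S - m ^ 2) * A) ^ 2 * (S - m ^ 2)⁻¹ := by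
      field_simp
      ring
    rw [hrw]
    positivity
  linarith [hkey, h2, h3]
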